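/- For every integer k ≥ 2 there exists a domain D in the d-regular tree T_d with |D| = k and |∂D| = ⌈((d−2)·k + 2)/(d−1)⌉. Consequently the inner vertex-isoperimetric profile of T_d is I_d(k) = ⌈((d−2)·k + 2)/(d−1)⌉ for all k ≥ 2. -/

import Mathlib

/-- Inner vertex boundary of a finite vertex set `D`: vertices of `D` having a neighbor
outside `D`. -/
noncomputable def innerBoundary {V : Type*} (G : SimpleGraph V) (D : Finset V) : Finset V := by
  classical exact D.filter (fun x => ∃ y, y ∉ D ∧ G.Adj x y)

/-- Outer vertex boundary of `D`: vertices outside `D` having a neighbor in `D`. -/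
def outerBoundary {V : Type*} (G : SimpleGraph V) (D : Finset V) : Set V :=
  {y | y ∉ D ∧ ∃ x ∈ D, G.Adj x y}

/-- Number of neighbors of `x` lying in `D`. -/
noncomputable def degIn {V : Type*} (G : SimpleGraph V) (D : Finset V) (x : V) : ℕ := by
  classical exact (D.filter (fun y => G.Adj x y)).card

/-- A domain: a finite nonempty vertex set whose induced subgraph is connected. -/
def IsGraphDomain {V : Type*} (G : SimpleGraph V) (D : Finset V) : Prop :=
  D.Nonempty ∧ (G.induce (↑D : Set V)).Connected

/-- `G` is a `d`-regular tree: connected, acyclic, and every vertex has degree `d`. -/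
def IsRegularTree {V : Type*} (G : SimpleGraph V) (d : ℕ) : Prop :=
  G.Connected ∧ G.IsAcyclic ∧ ∀ v : V, (G.neighborSet v).ncard = d

/-- Boundary branching excess `τ(D) = Σ_{x ∈ ∂D} (deg_D(x) − 1)`. -/
noncomputable def tauD {V : Type*} (G : SimpleGraph V) (D : Finset V) : ℕ :=
  ∑ x ∈ innerBoundary G D, (degIn G D x - 1)

/-- Residual boundary `R(D) = {x ∈ ∂D : deg_D(x) ≥ 2}`. -/
noncomputable def residualBoundary {V : Type*} (G : SimpleGraph V) (D : Finset V) : Finset V := by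
  classical exact (innerBoundary G D).filter (fun x => 2 ≤ degIn G D x)

/-- `D` is isoperimetrically optimal: its inner boundary is smallest among all domains
of the same cardinality. -/
def IsOptimal {V : Type*} (G : SimpleGraph V) (D : Finset V) : Prop :=
  ∀ D' : Finset V, IsGraphDomain G D' → D'.card = D.card →
    (innerBoundary G D).card ≤ (innerBoundary G D').card

open Finset SimpleGraph

section
variable {V : Type*} {d : ℕ} {T : SimpleGraph V}

lemma mem_innerBoundary {G : SimpleGraph V} {D : Finset V} {x : V} :
    x ∈ innerBoundary G D ↔ x ∈ D ∧ ∃ y, y ∉ D ∧ G.Adj x y := by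
  simp [innerBoundary]

lemma degIn_eq {G : SimpleGraph V} (D : Finset V) (x : V)
    [DecidablePred (fun y => G.Adj x y)] :
    degIn G D x = (D.filter (fun y => G.Adj x y)).card := by
  unfold degIn; congr 1; apply Finset.filter_congr_decidable

lemma nbr_finite (hT : IsRegularTree T d) (hd : 2 ≤ d) (x : V) :
    (T.neighborSet x).Finite := by
  by_contra h
  have h2 : (T.neighborSet x).Infinite := h
  have := h2.ncard
  rw [hT.2.2 x] at this; omega

/-- The neighbor Finset, via finiteness. -/
noncomputable def nbrF (T : SimpleGraph V) (hT : IsRegularTree T d) (hd : 2 ≤ d) (x : V) :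
    Finset V := (nbr_finite hT hd x).toFinset

lemma mem_nbrF {hT : IsRegularTree T d} {hd : 2 ≤ d} {x y : V} :
    y ∈ nbrF T hT hd x ↔ T.Adj x y := by
  simp [nbrF, mem_neighborSet]

lemma card_nbrF (hT : IsRegularTree T d) (hd : 2 ≤ d) (x : V) :
    (nbrF T hT hd x).card = d := by
  rw [nbrF, ← Set.ncard_eq_toFinset_card _ (nbr_finite hT hd x)]
  exact hT.2.2 x

lemma degIn_add_one_le (hT : IsRegularTree T d) (hd : 2 ≤ d) {D : Finset V} {x y₀ : V}
    (hy₀ : y₀ ∉ D) (ha : T.Adj x y₀) : degIn T D x + 1 ≤ d := by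
  classical
  rw [degIn_eq]
  have hsub : insert y₀ (D.filter (fun y => T.Adj x y)) ⊆ nbrF T hT hd x := by
    intro z hz
    rcases Finset.mem_insert.mp hz with rfl | hz
    · exact mem_nbrF.mpr ha
    · exact mem_nbrF.mpr (Finset.mem_filter.mp hz).2
  have := Finset.card_le_card hsub
  rw [Finset.card_insert_of_notMem (fun h => hy₀ (Finset.mem_filter.mp h).1),
    card_nbrF] at this
  omega

lemma degIn_of_interior (hT : IsRegularTree T d) (hd : 2 ≤ d) {D : Finset V} {x : V}
    (hx : x ∈ D) (hnb : x ∉ innerBoundary T D) : degIn T D x = d := by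
  classical
  rw [degIn_eq]
  have : nbrF T hT hd x ⊆ D.filter (fun y => T.Adj x y) := by
    intro z hz
    have haz := mem_nbrF.mp hz
    have hzD : z ∈ D := by
      by_contra hzD
      exact hnb (mem_innerBoundary.mpr ⟨hx, z, hzD, haz⟩)
    exact Finset.mem_filter.mpr ⟨hzD, haz⟩
  have h2 : D.filter (fun y => T.Adj x y) ⊆ nbrF T hT hd x := fun z hz =>
    mem_nbrF.mpr (Finset.mem_filter.mp hz).2
  rw [Finset.Subset.antisymm h2 this, card_nbrF]

lemma one_le_degIn {D : Finset V} (hD : IsGraphDomain T D) (hk : 2 ≤ D.card)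
    {x : V} (hx : x ∈ D) : 1 ≤ degIn T D x := by
  classical
  rw [degIn_eq]
  obtain ⟨z, hz, hzx⟩ := Finset.exists_mem_ne (s := D) (by omega) x
  have hreach : (T.induce (↑D : Set V)).Reachable ⟨x, hx⟩ ⟨z, hz⟩ :=
    hD.2.preconnected _ _
  obtain ⟨w⟩ := hreach
  cases w with
  | nil => exact absurd rfl hzx
  | cons h p =>
    rename_i b
    exact Finset.card_pos.mpr ⟨b.1, Finset.mem_filter.mpr ⟨b.2, h⟩⟩

lemma induce_acyclic (hac : T.IsAcyclic) (s : Set V) : (T.induce s).IsAcyclic := by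
  intro v c hc
  exact hac ((c.map (SimpleGraph.Embedding.induce (G := T) s).toHom))
    (hc.map (SimpleGraph.Embedding.induce (G := T) s).injective)

lemma sum_degIn {D : Finset V} (hac : T.IsAcyclic) (hD : IsGraphDomain T D) :
    (∑ x ∈ D, degIn T D x) + 2 = 2 * D.card := by
  classical
  set s : Set V := ↑D with hs
  haveI : Fintype ↥s := (D.finite_toSet).fintype
  set G' := T.induce s with hG'
  haveI : DecidableRel G'.Adj := Classical.decRel _
  have htree : G'.IsTree := ⟨hD.2, induce_acyclic hac s⟩
  have hcard : Fintype.card ↥s = D.card := by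
    simp [s]
  have hedge : G'.edgeFinset.card + 1 = D.card := by
    rw [htree.card_edgeFinset, hcard]
  have hdeg : ∀ v : ↥s, G'.degree v = degIn T D v.1 := by
    intro v
    rw [degIn_eq, SimpleGraph.degree]
    apply Finset.card_bij (fun (u : ↥s) _ => (u : V))
    · intro u hu
      rw [SimpleGraph.mem_neighborFinset G' v u] at hu
      exact Finset.mem_filter.mpr ⟨u.2, hu⟩
    · intro u₁ _ u₂ _ h; exact Subtype.ext h
    · intro y hy
      rw [Finset.mem_filter] at hy
      exact ⟨⟨y, hy.1⟩, (SimpleGraph.mem_neighborFinset G' v ⟨y, hy.1⟩).mpr hy.2, rfl⟩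
  have hsum : ∑ v : ↥s, G'.degree v = ∑ x ∈ D, degIn T D x := by
    rw [Finset.sum_congr rfl (fun v _ => hdeg v)]
    apply Finset.sum_bij (fun (v : ↥s) _ => (v : V))
    · intro v _; exact v.2
    · intro u₁ _ u₂ _ h; exact Subtype.ext h
    · intro y hy; exact ⟨⟨y, hy⟩, Finset.mem_univ _, rfl⟩
    · intro v _; rfl
  have := G'.sum_degrees_eq_twice_card_edges
  rw [hsum] at this
  omega

lemma innerBoundary_subset {G : SimpleGraph V} {D : Finset V} : innerBoundary G D ⊆ D := by
  intro x hx; exact (mem_innerBoundary.mp hx).1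

lemma key_identity (hT : IsRegularTree T d) (hd : 2 ≤ d) {D : Finset V}
    (hD : IsGraphDomain T D) (hk : 2 ≤ D.card) :
    ((d : ℤ) - 1) * (innerBoundary T D).card = ((d : ℤ) - 2) * D.card + 2 + tauD T D := by
  classical
  set B := innerBoundary T D with hB
  have hBD : B ⊆ D := innerBoundary_subset
  have hsplit : ∑ x ∈ D \ B, degIn T D x + ∑ x ∈ B, degIn T D x = ∑ x ∈ D, degIn T D x :=
    Finset.sum_sdiff hBD
  have hint : ∑ x ∈ D \ B, degIn T D x = (D.card - B.card) * d := by
    rw [Finset.sum_congr rfl (fun x hx => degIn_of_interior hT hd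
      (Finset.mem_sdiff.mp hx).1 (Finset.mem_sdiff.mp hx).2)]
    rw [Finset.sum_const, Finset.card_sdiff_of_subset hBD, smul_eq_mul]
  have htau : ∑ x ∈ B, degIn T D x = tauD T D + B.card := by
    have hc : ∀ x ∈ B, degIn T D x = (degIn T D x - 1) + 1 := fun x hx =>
      (Nat.sub_add_cancel (one_le_degIn hD hk (hBD hx))).symm
    rw [Finset.sum_congr rfl hc, Finset.sum_add_distrib, Finset.sum_const, smul_eq_mul,
      mul_one, tauD, ← hB]
  have hsum := sum_degIn hT.2.1 hD
  have hle : B.card ≤ D.card := Finset.card_le_card hBD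
  -- now pure arithmetic
  have h1 : (D.card - B.card) * d + (tauD T D + B.card) + 2 = 2 * D.card := by
    rw [← hint, ← htau, hsplit]; exact hsum
  zify [hle] at h1
  linear_combination (-1 : ℤ) * h1

lemma tau_le (hT : IsRegularTree T d) (hd : 2 ≤ d) {D : Finset V}
    (hR : (residualBoundary T D).card ≤ 1) : tauD T D ≤ d - 2 := by
  classical
  have hterm : ∀ x ∈ innerBoundary T D, degIn T D x - 1 ≤ d - 2 := by
    intro x hx
    obtain ⟨hxD, y, hy, ha⟩ := mem_innerBoundary.mp hx
    have := degIn_add_one_le hT hd hy ha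
    omega
  have hzero : ∀ x ∈ innerBoundary T D, x ∉ residualBoundary T D → degIn T D x - 1 = 0 := by
    intro x hx hxr
    have : ¬ 2 ≤ degIn T D x := fun h => hxr (by
      simp only [residualBoundary]
      exact Finset.mem_filter.mpr ⟨hx, h⟩)
    omega
  have hRsub : residualBoundary T D ⊆ innerBoundary T D := by
    intro x hx
    simp only [residualBoundary] at hx
    exact (Finset.mem_filter.mp hx).1
  calc tauD T D = ∑ x ∈ residualBoundary T D, (degIn T D x - 1) := by
        rw [tauD]
        refine (Finset.sum_subset hRsub ?_).symm
        exact hzero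
    _ ≤ ∑ _x ∈ residualBoundary T D, (d - 2) :=
        Finset.sum_le_sum (fun x hx => hterm x (hRsub hx))
    _ = (residualBoundary T D).card * (d - 2) := by rw [Finset.sum_const, smul_eq_mul]
    _ ≤ 1 * (d - 2) := Nat.mul_le_mul_right _ hR
    _ = d - 2 := one_mul _

lemma boundary_card_eq_ceil (hT : IsRegularTree T d) (hd : 2 ≤ d) {D : Finset V}
    (hD : IsGraphDomain T D) (hk : 2 ≤ D.card) (hR : (residualBoundary T D).card ≤ 1) :
    ((innerBoundary T D).card : ℤ)
      = ⌈(((d : ℚ) - 2) * (D.card : ℚ) + 2) / ((d : ℚ) - 1)⌉ := by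
  have hid := key_identity hT hd hD hk
  have htau := tau_le hT hd hR
  have htau' : (tauD T D : ℤ) ≤ (d : ℤ) - 2 := by
    have : (tauD T D : ℤ) ≤ ((d - 2 : ℕ) : ℤ) := by exact_mod_cast htau
    omega
  have hdpos : (0 : ℚ) < (d : ℚ) - 1 := by
    have : (2 : ℚ) ≤ (d : ℚ) := by exact_mod_cast hd
    linarith
  set b : ℤ := ((innerBoundary T D).card : ℤ)
  set k : ℤ := (D.card : ℤ)
  refine le_antisymm ?_ ?_
  · -- b ≤ ceil: show (b - 1 : ℚ) < value
    rw [Int.le_ceil_iff]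
    rw [lt_div_iff₀ hdpos]
    have : ((d : ℤ) - 1) * (b - 1) < ((d : ℤ) - 2) * k + 2 := by
      have ht0 : (0 : ℤ) ≤ (tauD T D : ℤ) := Int.ofNat_nonneg _
      nlinarith [hid]
    calc ((b : ℚ) - 1) * ((d : ℚ) - 1) = (((((d : ℤ) - 1) * (b - 1)) : ℤ) : ℚ) := by
          push_cast; ring
      _ < (((((d : ℤ) - 2) * k + 2) : ℤ) : ℚ) := by exact_mod_cast this
      _ = ((d : ℚ) - 2) * (k : ℚ) + 2 := by push_cast; ring
      _ = ((d : ℚ) - 2) * ((D.card : ℚ)) + 2 := by norm_num [k]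
  · rw [Int.ceil_le]
    rw [div_le_iff₀ hdpos]
    have : ((d : ℤ) - 2) * k + 2 ≤ ((d : ℤ) - 1) * b := by
      have ht0 : (0 : ℤ) ≤ (tauD T D : ℤ) := Int.ofNat_nonneg _
      linarith [hid]
    calc ((d : ℚ) - 2) * ((D.card : ℚ)) + 2 = (((((d : ℤ) - 2) * k + 2) : ℤ) : ℚ) := by
          simp only [k]; push_cast; ring
      _ ≤ (((((d : ℤ) - 1) * b) : ℤ) : ℚ) := by exact_mod_cast this
      _ = (b : ℚ) * ((d : ℚ) - 1) := by push_cast; ring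

lemma ceil_le_boundary (hT : IsRegularTree T d) (hd : 2 ≤ d) {D : Finset V}
    (hD : IsGraphDomain T D) (hk : 2 ≤ D.card) :
    ⌈(((d : ℚ) - 2) * (D.card : ℚ) + 2) / ((d : ℚ) - 1)⌉
      ≤ ((innerBoundary T D).card : ℤ) := by
  have hid := key_identity hT hd hD hk
  have hdpos : (0 : ℚ) < (d : ℚ) - 1 := by
    have : (2 : ℚ) ≤ (d : ℚ) := by exact_mod_cast hd
    linarith
  rw [Int.ceil_le, div_le_iff₀ hdpos]
  have : ((d : ℤ) - 2) * (D.card : ℤ) + 2 ≤ ((d : ℤ) - 1) * ((innerBoundary T D).card : ℤ) := by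
    have ht0 : (0 : ℤ) ≤ (tauD T D : ℤ) := Int.ofNat_nonneg _
    linarith [hid]
  calc ((d : ℚ) - 2) * ((D.card : ℚ)) + 2
        = (((((d : ℤ) - 2) * (D.card : ℤ) + 2) : ℤ) : ℚ) := by push_cast; ring
    _ ≤ (((((d : ℤ) - 1) * ((innerBoundary T D).card : ℤ)) : ℤ) : ℚ) := by exact_mod_cast this
    _ = (((innerBoundary T D).card : ℤ) : ℚ) * ((d : ℚ) - 1) := by push_cast; ring

lemma induce_insert_connected [DecidableEq V] {D : Finset V} (hD : (T.induce (↑D : Set V)).Connected)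
    {x v : V} (hx : x ∈ D) (ha : T.Adj x v) :
    (T.induce (↑(insert v D) : Set V)).Connected := by
  classical
  have hsub : (↑D : Set V) ⊆ (↑(insert v D) : Set V) := by
    intro z hz
    simp only [Finset.coe_insert, Set.mem_insert_iff]
    exact Or.inr hz
  have hxmem : x ∈ (↑(insert v D) : Set V) := hsub hx
  have key : ∀ a : (↑(insert v D) : Set V),
      (T.induce (↑(insert v D) : Set V)).Reachable a ⟨x, hxmem⟩ := by
    intro a
    have ha2 : (a : V) ∈ insert v D := by exact_mod_cast a.2
    rcases Finset.mem_insert.mp ha2 with h | h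
    · by_cases hxv : (a : V) = x
      · have haeq : a = ⟨x, hxmem⟩ := Subtype.ext (by exact hxv)
        rw [haeq]
      · have hadj : (T.induce (↑(insert v D) : Set V)).Adj a ⟨x, hxmem⟩ := by
          simp only [SimpleGraph.comap_adj, Function.Embedding.coe_subtype]
          rw [h]
          exact ha.symm
        exact hadj.reachable
    · have hr := (hD.preconnected ⟨(a : V), by exact_mod_cast h⟩
        ⟨x, by exact_mod_cast hx⟩).map (T.induceHomOfLE hsub).toHom
      rwa [show ((T.induceHomOfLE hsub).toHom ⟨(a : V), by exact_mod_cast h⟩) = a from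
        Subtype.ext rfl, show ((T.induceHomOfLE hsub).toHom ⟨x, by exact_mod_cast hx⟩)
        = ⟨x, hxmem⟩ from Subtype.ext rfl] at hr
  haveI : Nonempty (↑(insert v D) : Set V) := ⟨⟨x, hxmem⟩⟩
  exact ⟨fun a b => (key a).trans (key b).symm⟩

lemma unique_nbr (hac : T.IsAcyclic) {D : Finset V} (hD : IsGraphDomain T D)
    {x v y : V} (hx : x ∈ D) (hv : v ∉ D) (hxv : T.Adj x v) (hy : y ∈ D) (hyv : T.Adj v y) :
    y = x := by
  classical
  by_contra hne
  have hxD : x ∈ (↑D : Set V) := by exact_mod_cast hx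
  have hyD : y ∈ (↑D : Set V) := by exact_mod_cast hy
  obtain ⟨w⟩ := hD.2.preconnected ⟨x, hxD⟩ ⟨y, hyD⟩
  let p : (T.induce (↑D : Set V)).Path ⟨x, hxD⟩ ⟨y, hyD⟩ := w.toPath
  let q : T.Walk x y := SimpleGraph.Walk.copy
    ((p : (T.induce (↑D : Set V)).Walk ⟨x, hxD⟩ ⟨y, hyD⟩).map
      (SimpleGraph.Embedding.induce (G := T) (↑D : Set V)).toHom) rfl rfl
  have hqp : q.IsPath := by
    simp only [q]
    refine (SimpleGraph.Walk.isPath_copy _ _ _).mpr ?_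
    exact SimpleGraph.Walk.map_isPath_of_injective
      (SimpleGraph.Embedding.induce (G := T) (↑D : Set V)).injective p.2
  have hsupp : ∀ z, z ∈ q.support → z ∈ D := by
    intro z hz
    simp only [q] at hz
    have hz := (congrArg (z ∈ ·) (SimpleGraph.Walk.support_copy _ _ _)).mp hz
    rw [SimpleGraph.Walk.support_map] at hz
    obtain ⟨u, hu, rfl⟩ := List.mem_map.mp hz
    exact_mod_cast u.2
  have hp1 : (SimpleGraph.Walk.cons hxv.symm q).IsPath :=
    hqp.cons (fun h => hv (hsupp v h))
  have hp2 : (SimpleGraph.Walk.cons hyv SimpleGraph.Walk.nil).IsPath := by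
    refine SimpleGraph.Walk.IsPath.nil.cons ?_
    simp only [SimpleGraph.Walk.support_nil, List.mem_singleton]
    rintro rfl
    exact hv hy
  have heq := hac.path_unique ⟨SimpleGraph.Walk.cons hxv.symm q, hp1⟩
    ⟨SimpleGraph.Walk.cons hyv SimpleGraph.Walk.nil, hp2⟩
  have hx1 : x ∈ (SimpleGraph.Walk.cons hxv.symm q).support := by
    rw [SimpleGraph.Walk.support_cons]
    exact List.mem_cons_of_mem _ q.start_mem_support
  have heq' : (SimpleGraph.Walk.cons hxv.symm q) = (SimpleGraph.Walk.cons hyv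
      SimpleGraph.Walk.nil) := congrArg Subtype.val heq
  rw [heq'] at hx1
  simp only [SimpleGraph.Walk.support_cons, SimpleGraph.Walk.support_nil,
    List.mem_cons, List.mem_singleton, List.not_mem_nil, or_false] at hx1
  rcases hx1 with rfl | rfl
  · exact hv hx
  · exact hne rfl

section Step
variable [DecidableEq V] {D : Finset V} {x v : V}

lemma degIn_insert_self (hv : v ∉ D) (hx : x ∈ D) (hxv : T.Adj x v)
    (hP : ∀ y ∈ D, T.Adj v y → y = x) : degIn T (insert v D) v = 1 := by
  classical
  rw [degIn_eq]
  have : (insert v D).filter (fun y => T.Adj v y) = {x} := by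
    ext z
    simp only [Finset.mem_filter, Finset.mem_insert, Finset.mem_singleton]
    constructor
    · rintro ⟨rfl | hz, hadj⟩
      · exact absurd hadj (T.irrefl)
      · exact hP z hz hadj
    · rintro rfl
      exact ⟨Or.inr hx, hxv.symm⟩
  rw [this, Finset.card_singleton]

lemma degIn_insert_other (hv : v ∉ D) (hx : x ∈ D)
    (hP : ∀ y ∈ D, T.Adj v y → y = x) {y : V} (hy : y ∈ D) (hne : y ≠ x) :
    degIn T (insert v D) y = degIn T D y := by
  classical
  rw [degIn_eq, degIn_eq, Finset.filter_insert, if_neg]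
  intro hadj
  exact hne (hP y hy hadj.symm)

lemma degIn_insert_x (hv : v ∉ D) (hxv : T.Adj x v) :
    degIn T (insert v D) x = degIn T D x + 1 := by
  classical
  rw [degIn_eq, degIn_eq, Finset.filter_insert, if_pos hxv,
    Finset.card_insert_of_notMem (fun h => hv (Finset.mem_filter.mp h).1)]

lemma mem_boundary_insert_other (hv : v ∉ D) (hx : x ∈ D)
    (hP : ∀ y ∈ D, T.Adj v y → y = x) {y : V} (hy : y ∈ D) (hne : y ≠ x) :
    (y ∈ innerBoundary T (insert v D) ↔ y ∈ innerBoundary T D) := by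
  rw [mem_innerBoundary, mem_innerBoundary]
  constructor
  · rintro ⟨-, z, hz, hadj⟩
    exact ⟨hy, z, fun h => hz (Finset.mem_insert_of_mem h), hadj⟩
  · rintro ⟨-, z, hz, hadj⟩
    refine ⟨Finset.mem_insert_of_mem hy, z, ?_, hadj⟩
    intro h
    rcases Finset.mem_insert.mp h with rfl | h
    · exact hne (hP y hy hadj.symm)
    · exact hz h

lemma v_mem_boundary_insert (hT : IsRegularTree T d) (hd : 2 ≤ d) (hv : v ∉ D)
    (hP : ∀ y ∈ D, T.Adj v y → y = x) : v ∈ innerBoundary T (insert v D) := by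
  classical
  rw [mem_innerBoundary]
  refine ⟨Finset.mem_insert_self _ _, ?_⟩
  have hcard : 1 ≤ ((nbrF T hT hd v).erase x).card := by
    have := card_nbrF hT hd v
    have := Finset.card_erase_le (a := x) (s := nbrF T hT hd v)
    have h2 := Finset.pred_card_le_card_erase (a := x) (s := nbrF T hT hd v)
    omega
  have hpos : 0 < ((nbrF T hT hd v).erase x).card := hcard
  obtain ⟨z, hz⟩ := Finset.card_pos.mp hpos
  have hzx : z ≠ x := Finset.ne_of_mem_erase hz
  have hadj : T.Adj v z := mem_nbrF.mp (Finset.mem_of_mem_erase hz)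
  refine ⟨z, ?_, hadj⟩
  intro h
  rcases Finset.mem_insert.mp h with rfl | h
  · exact absurd hadj (T.irrefl)
  · exact hzx (hP z h hadj)

lemma x_not_mem_boundary_insert (hT : IsRegularTree T d) (hd : 2 ≤ d) (hv : v ∉ D)
    (hxv : T.Adj x v) (hdeg : degIn T D x + 1 = d) :
    x ∉ innerBoundary T (insert v D) := by
  classical
  intro hmem
  obtain ⟨-, z, hz, hadj⟩ := mem_innerBoundary.mp hmem
  have hzv : z ≠ v := fun h => hz (h ▸ Finset.mem_insert_self _ _)
  have hzD : z ∉ D := fun h => hz (Finset.mem_insert_of_mem h)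
  have hsub : insert z (insert v (D.filter (fun y => T.Adj x y))) ⊆ nbrF T hT hd x := by
    intro w hw
    rcases Finset.mem_insert.mp hw with rfl | hw
    · exact mem_nbrF.mpr hadj
    rcases Finset.mem_insert.mp hw with rfl | hw
    · exact mem_nbrF.mpr hxv
    · exact mem_nbrF.mpr (Finset.mem_filter.mp hw).2
  have hcards := Finset.card_le_card hsub
  rw [card_nbrF] at hcards
  rw [Finset.card_insert_of_notMem, Finset.card_insert_of_notMem] at hcards
  · rw [← degIn_eq] at hcards; omega
  · exact fun h => hv (Finset.mem_filter.mp h).1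
  · intro h
    rcases Finset.mem_insert.mp h with rfl | h
    · exact hzv rfl
    · exact hzD (Finset.mem_filter.mp h).1

lemma x_mem_boundary_insert (hT : IsRegularTree T d) (hd : 2 ≤ d) (hv : v ∉ D)
    (hx : x ∈ D) (hxv : T.Adj x v) (hdeg : degIn T D x + 2 ≤ d) :
    x ∈ innerBoundary T (insert v D) := by
  classical
  rw [mem_innerBoundary]
  refine ⟨Finset.mem_insert_of_mem hx, ?_⟩
  have hsub : insert v (D.filter (fun y => T.Adj x y)) ⊆ nbrF T hT hd x := by
    intro w hw
    rcases Finset.mem_insert.mp hw with rfl | hw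
    · exact mem_nbrF.mpr hxv
    · exact mem_nbrF.mpr (Finset.mem_filter.mp hw).2
  have hlt : (insert v (D.filter (fun y => T.Adj x y))).card < (nbrF T hT hd x).card := by
    rw [card_nbrF, Finset.card_insert_of_notMem (fun h => hv (Finset.mem_filter.mp h).1),
      ← degIn_eq]
    omega
  have : ¬ (nbrF T hT hd x ⊆ insert v (D.filter (fun y => T.Adj x y))) := by
    intro h
    exact absurd (Finset.card_le_card h) (by omega)
  obtain ⟨z, hz1, hz2⟩ := Finset.not_subset.mp this
  refine ⟨z, ?_, mem_nbrF.mp hz1⟩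
  intro h
  rcases Finset.mem_insert.mp h with rfl | h
  · exact hz2 (Finset.mem_insert_self _ _)
  · exact hz2 (Finset.mem_insert_of_mem
      (Finset.mem_filter.mpr ⟨h, mem_nbrF.mp hz1⟩))

lemma boundary_insert_case1 (hT : IsRegularTree T d) (hd : 2 ≤ d) (hv : v ∉ D)
    (hx : x ∈ D) (hxv : T.Adj x v) (hP : ∀ y ∈ D, T.Adj v y → y = x)
    (hdeg : degIn T D x + 1 = d) :
    innerBoundary T (insert v D) = insert v ((innerBoundary T D).erase x) := by
  ext a
  by_cases hav : a = v
  · subst hav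
    simp only [Finset.mem_insert, true_or, iff_true]
    exact v_mem_boundary_insert hT hd hv hP
  · by_cases hax : a = x
    · subst hax
      simp only [Finset.mem_insert, hav, false_or]
      constructor
      · intro h; exact absurd h (x_not_mem_boundary_insert hT hd hv hxv hdeg)
      · intro h; exact absurd rfl (Finset.ne_of_mem_erase h)
    · by_cases haD : a ∈ D
      · rw [mem_boundary_insert_other hv hx hP haD hax]
        simp only [Finset.mem_insert, hav, false_or, Finset.mem_erase, hax,
          ne_eq, not_false_eq_true, true_and]
      · constructor
        · intro h
          obtain ⟨hmem, -⟩ := mem_innerBoundary.mp h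
          rcases Finset.mem_insert.mp hmem with rfl | h2
          · exact absurd rfl hav
          · exact absurd h2 haD
        · intro h
          rcases Finset.mem_insert.mp h with rfl | h2
          · exact absurd rfl hav
          · exact absurd (innerBoundary_subset (Finset.mem_of_mem_erase h2)) haD

lemma boundary_insert_case2 (hT : IsRegularTree T d) (hd : 2 ≤ d) (hv : v ∉ D)
    (hx : x ∈ D) (hxv : T.Adj x v) (hP : ∀ y ∈ D, T.Adj v y → y = x)
    (hdeg : degIn T D x + 2 ≤ d) (hxB : x ∈ innerBoundary T D) :
    innerBoundary T (insert v D) = insert v (innerBoundary T D) := by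
  ext a
  by_cases hav : a = v
  · subst hav
    simp only [Finset.mem_insert, true_or, iff_true]
    exact v_mem_boundary_insert hT hd hv hP
  · by_cases hax : a = x
    · subst hax
      simp only [Finset.mem_insert, hav, false_or]
      constructor
      · intro _; exact hxB
      · intro _; exact x_mem_boundary_insert hT hd hv hx hxv hdeg
    · by_cases haD : a ∈ D
      · rw [mem_boundary_insert_other hv hx hP haD hax]
        simp only [Finset.mem_insert, hav, false_or]
      · constructor
        · intro h
          obtain ⟨hmem, -⟩ := mem_innerBoundary.mp h
          rcases Finset.mem_insert.mp hmem with rfl | h2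
          · exact absurd rfl hav
          · exact absurd h2 haD
        · intro h
          rcases Finset.mem_insert.mp h with rfl | h2
          · exact absurd rfl hav
          · exact absurd (innerBoundary_subset h2) haD

lemma mem_residualBoundary {G : SimpleGraph V} {D' : Finset V} {y : V} :
    y ∈ residualBoundary G D' ↔ y ∈ innerBoundary G D' ∧ 2 ≤ degIn G D' y := by
  simp [residualBoundary]

end Step

lemma boundary_nonempty (hT : IsRegularTree T d) (hd : 2 ≤ d) {D : Finset V}
    (hD : IsGraphDomain T D) (hk : 2 ≤ D.card) : x ∈ D → (innerBoundary T D).Nonempty := by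
  intro _
  rw [← Finset.card_pos]
  by_contra h
  have hzero : (innerBoundary T D).card = 0 := by omega
  have hid := key_identity hT hd hD hk
  rw [hzero] at hid
  have h1 : (0 : ℤ) ≤ ((d : ℤ) - 2) * D.card := by
    have : (2 : ℤ) ≤ (d : ℤ) := by exact_mod_cast hd
    have : (0 : ℤ) ≤ (D.card : ℤ) := Int.ofNat_nonneg _
    nlinarith
  have h2 : (0 : ℤ) ≤ (tauD T D : ℤ) := Int.ofNat_nonneg _
  simp only [Nat.cast_zero, mul_zero] at hid
  linarith

lemma step_lemma (hT : IsRegularTree T d) (hd : 2 ≤ d) {D : Finset V}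
    (hdom : IsGraphDomain T D) (hk : 2 ≤ D.card)
    (hR : (residualBoundary T D).card ≤ 1) :
    ∃ D' : Finset V, IsGraphDomain T D' ∧ D'.card = D.card + 1 ∧
      (residualBoundary T D').card ≤ 1 := by
  classical
  obtain ⟨x₀, hx₀D⟩ := hdom.1
  have hBne : (innerBoundary T D).Nonempty := boundary_nonempty hT hd hdom hk hx₀D
  have hdeg_le : ∀ y ∈ innerBoundary T D, degIn T D y + 1 ≤ d := by
    intro y hy
    obtain ⟨-, z, hz, hadj⟩ := mem_innerBoundary.mp hy
    exact degIn_add_one_le hT hd hz hadj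
  by_cases hcase : ∃ x ∈ innerBoundary T D, degIn T D x + 1 = d
  · -- Case 1
    obtain ⟨x, hxB, hdeg⟩ := hcase
    obtain ⟨hxD, v, hv, hxv⟩ := mem_innerBoundary.mp hxB
    have hP : ∀ y ∈ D, T.Adj v y → y = x := fun y hy hady =>
      unique_nbr hT.2.1 hdom hxD hv hxv hy hady
    refine ⟨insert v D, ⟨Finset.insert_nonempty _ _,
      induce_insert_connected hdom.2 hxD hxv⟩, Finset.card_insert_of_notMem hv, ?_⟩
    have hRempty : residualBoundary T (insert v D) = ∅ := by
      rw [Finset.eq_empty_iff_forall_notMem]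
      intro y hy
      obtain ⟨hyB, hydeg⟩ := mem_residualBoundary.mp hy
      rw [boundary_insert_case1 hT hd hv hxD hxv hP hdeg] at hyB
      rcases Finset.mem_insert.mp hyB with rfl | hyB
      · rw [degIn_insert_self hv hxD hxv hP] at hydeg; omega
      · have hyx : y ≠ x := Finset.ne_of_mem_erase hyB
        have hyB' : y ∈ innerBoundary T D := Finset.mem_of_mem_erase hyB
        have hyD : y ∈ D := innerBoundary_subset hyB'
        rw [degIn_insert_other hv hxD hP hyD hyx] at hydeg
        have hyR : y ∈ residualBoundary T D := mem_residualBoundary.mpr ⟨hyB', hydeg⟩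
        have hd3 : 3 ≤ d := by have := hdeg_le y hyB'; omega
        have hxR : x ∈ residualBoundary T D := mem_residualBoundary.mpr ⟨hxB, by omega⟩
        exact hyx (Finset.card_le_one.mp hR y hyR x hxR)
    rw [hRempty]
    simp
  · -- Case 2
    push_neg at hcase
    have hdeg2 : ∀ y ∈ innerBoundary T D, degIn T D y + 2 ≤ d := by
      intro y hy
      have := hdeg_le y hy
      have := hcase y hy
      omega
    -- choose x
    obtain ⟨x, hxB, hRsub⟩ : ∃ x ∈ innerBoundary T D,
        residualBoundary T D ⊆ {x} := by
      rcases (residualBoundary T D).eq_empty_or_nonempty with hRe | ⟨x, hxR⟩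
      · exact ⟨hBne.choose, hBne.choose_spec, by rw [hRe]; exact Finset.empty_subset _⟩
      · refine ⟨x, (mem_residualBoundary.mp hxR).1, ?_⟩
        intro y hy
        rw [Finset.mem_singleton]
        exact Finset.card_le_one.mp hR y hy x hxR
    obtain ⟨hxD, v, hv, hxv⟩ := mem_innerBoundary.mp hxB
    have hP : ∀ y ∈ D, T.Adj v y → y = x := fun y hy hady =>
      unique_nbr hT.2.1 hdom hxD hv hxv hy hady
    refine ⟨insert v D, ⟨Finset.insert_nonempty _ _,
      induce_insert_connected hdom.2 hxD hxv⟩, Finset.card_insert_of_notMem hv, ?_⟩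
    have hRsub' : residualBoundary T (insert v D) ⊆ {x} := by
      intro y hy
      obtain ⟨hyB, hydeg⟩ := mem_residualBoundary.mp hy
      rw [boundary_insert_case2 hT hd hv hxD hxv hP (hdeg2 x hxB) hxB] at hyB
      rcases Finset.mem_insert.mp hyB with rfl | hyB
      · rw [degIn_insert_self hv hxD hxv hP] at hydeg; omega
      · by_cases hyx : y = x
        · simp [hyx]
        · have hyD : y ∈ D := innerBoundary_subset hyB
          rw [degIn_insert_other hv hxD hP hyD hyx] at hydeg
          exact hRsub (mem_residualBoundary.mpr ⟨hyB, hydeg⟩)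
    calc (residualBoundary T (insert v D)).card ≤ ({x} : Finset V).card :=
          Finset.card_le_card hRsub'
      _ = 1 := Finset.card_singleton x

lemma base_lemma (hT : IsRegularTree T d) (hd : 2 ≤ d) :
    ∃ D : Finset V, IsGraphDomain T D ∧ D.card = 2 ∧
      (residualBoundary T D).card ≤ 1 := by
  classical
  obtain ⟨u⟩ := hT.1.nonempty
  have hpos : 0 < (nbrF T hT hd u).card := by rw [card_nbrF]; omega
  obtain ⟨v, hv⟩ := Finset.card_pos.mp hpos
  have hadj : T.Adj u v := mem_nbrF.mp hv
  have hne : v ≠ u := hadj.ne'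
  have hvD : v ∉ ({u} : Finset V) := by simp [hne]
  have huD : u ∈ ({u} : Finset V) := Finset.mem_singleton_self u
  have hP : ∀ y ∈ ({u} : Finset V), T.Adj v y → y = u := by
    intro y hy _
    exact Finset.mem_singleton.mp hy
  have hsing : (T.induce (↑({u} : Finset V) : Set V)).Connected := by
    haveI : Nonempty (↑({u} : Finset V) : Set V) := ⟨⟨u, by simp⟩⟩
    refine ⟨fun a b => ?_⟩
    have ha : (a : V) = u := by have := a.2; simpa using this
    have hb : (b : V) = u := by have := b.2; simpa using this
    rw [show a = b from Subtype.ext (ha.trans hb.symm)]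
  refine ⟨insert v {u}, ⟨Finset.insert_nonempty _ _,
    induce_insert_connected hsing huD hadj⟩, ?_, ?_⟩
  · rw [Finset.card_insert_of_notMem hvD, Finset.card_singleton]
  · have hdv : degIn T (insert v {u}) v = 1 := degIn_insert_self hvD huD hadj hP
    have hdu : degIn T (insert v {u}) u = 1 := by
      rw [degIn_insert_x hvD hadj]
      have : degIn T ({u} : Finset V) u = 0 := by
        classical
        rw [degIn_eq]
        simp [Finset.filter_singleton, T.irrefl]
      omega
    have : residualBoundary T (insert v {u}) = ∅ := by
      rw [Finset.eq_empty_iff_forall_notMem]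
      intro y hy
      obtain ⟨hyB, hydeg⟩ := mem_residualBoundary.mp hy
      have hyD : y ∈ insert v {u} := innerBoundary_subset hyB
      rcases Finset.mem_insert.mp hyD with rfl | hyD
      · omega
      · rw [Finset.mem_singleton.mp hyD] at hydeg; omega
    rw [this]
    simp

lemma exists_good (hT : IsRegularTree T d) (hd : 2 ≤ d) :
    ∀ k : ℕ, 2 ≤ k → ∃ D : Finset V, IsGraphDomain T D ∧ D.card = k ∧
      (residualBoundary T D).card ≤ 1 := by
  intro k hk
  induction k, hk using Nat.le_induction with
  | base => exact base_lemma hT hd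
  | succ n hn ih =>
    obtain ⟨D, hdom, hcard, hR⟩ := ih
    obtain ⟨D', hdom', hcard', hR'⟩ := step_lemma hT hd hdom (hcard ▸ hn) hR
    exact ⟨D', hdom', by omega, hR'⟩

end

/-- The isoperimetric profile of the `d`-regular tree: for every `k ≥ 2`, the value
`⌈((d−2)k+2)/(d−1)⌉` is attained by some domain of size `k` and is the minimum of
`|∂D|` over all domains of size `k`. -/
theorem stmt_5 {V : Type*} (d : ℕ) (hd : 2 ≤ d) (T : SimpleGraph V)
    (hT : IsRegularTree T d) (k : ℕ) (hk : 2 ≤ k) :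
    IsLeast {n : ℤ | ∃ D : Finset V, IsGraphDomain T D ∧ D.card = k ∧
        ((innerBoundary T D).card : ℤ) = n}
      ⌈(((d : ℚ) - 2) * (k : ℚ) + 2) / ((d : ℚ) - 1)⌉ := by
  constructor
  · obtain ⟨D, hdom, hcard, hR⟩ := exists_good hT hd k hk
    refine ⟨D, hdom, hcard, ?_⟩
    rw [boundary_card_eq_ceil hT hd hdom (hcard ▸ hk) hR, hcard]
  · rintro n ⟨D, hdom, hcard, rfl⟩
    have := ceil_le_boundary hT hd hdom (hcard ▸ hk)
    rwa [hcard] at this
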